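/- Identify $\mathbb{H}^n \cong \mathbb{R}^{4n}$ ($n \geq 2$) and define $Sp(n)Sp(1) = \{g \in SO(4n) : g \cdot \mathrm{span}\{I,J,K\} = \mathrm{span}\{I,J,K\}\}$ (conjugation action on endomorphisms). Let $a \in SO(4n)$ be such that for every nonzero $x \in \mathbb{R}^{4n}$, every $L \in \mathrm{span}\{I,J,K\}$ with $L^2 = -1$, and every $y \perp \mathrm{span}\{x, Lx\}$, there exists $g \in Sp(n)Sp(1)$ agreeing with $a$ on $\mathrm{span}\{x, Lx, y, Ly\}$. Then $a \in Sp(n)Sp(1)$, i.e., $a L a^{-1} \in \mathrm{span}\{I,J,K\}$ for all $L \in \mathrm{span}\{I,J,K\}$. -/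

import Mathlib

open Kronecker

noncomputable def quatI (n : ℕ) : Matrix (Fin n × Fin 4) (Fin n × Fin 4) ℝ :=
  (1 : Matrix (Fin n) (Fin n) ℝ) ⊗ₖ !![0, 1, 0, 0; -1, 0, 0, 0; 0, 0, 0, -1; 0, 0, 1, 0]

noncomputable def quatJ (n : ℕ) : Matrix (Fin n × Fin 4) (Fin n × Fin 4) ℝ :=
  (1 : Matrix (Fin n) (Fin n) ℝ) ⊗ₖ !![0, 0, 1, 0; 0, 0, 0, 1; -1, 0, 0, 0; 0, -1, 0, 0]

noncomputable def quatK (n : ℕ) : Matrix (Fin n × Fin 4) (Fin n × Fin 4) ℝ :=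
  (1 : Matrix (Fin n) (Fin n) ℝ) ⊗ₖ !![0, 0, 0, 1; 0, 0, -1, 0; 0, 1, 0, 0; -1, 0, 0, 0]

/-- The span of the quaternionic structures `I, J, K` inside the matrix algebra. -/
noncomputable def quatSpan (n : ℕ) : Submodule ℝ (Matrix (Fin n × Fin 4) (Fin n × Fin 4) ℝ) :=
  Submodule.span ℝ {quatI n, quatJ n, quatK n}

/-- Membership in `Sp(n)Sp(1) = {g ∈ SO(4n) : g·span{I,J,K}·g⁻¹ = span{I,J,K}}`. -/
noncomputable def memSpnSp1 (n : ℕ) (g : Matrix (Fin n × Fin 4) (Fin n × Fin 4) ℝ) : Prop :=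
  g * g.transpose = 1 ∧ g.det = 1 ∧ ∀ L ∈ quatSpan n, g * L * g⁻¹ ∈ quatSpan n

section Aux
open Matrix

private noncomputable def BI : Matrix (Fin 4) (Fin 4) ℝ :=
  !![0, 1, 0, 0; -1, 0, 0, 0; 0, 0, 0, -1; 0, 0, 1, 0]
private noncomputable def BJ : Matrix (Fin 4) (Fin 4) ℝ :=
  !![0, 0, 1, 0; 0, 0, 0, 1; -1, 0, 0, 0; 0, -1, 0, 0]
private noncomputable def BK : Matrix (Fin 4) (Fin 4) ℝ :=
  !![0, 0, 0, 1; 0, 0, -1, 0; 0, 1, 0, 0; -1, 0, 0, 0]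

private lemma quatI_eq (n : ℕ) : quatI n = (1 : Matrix (Fin n) (Fin n) ℝ) ⊗ₖ BI := rfl
private lemma quatJ_eq (n : ℕ) : quatJ n = (1 : Matrix (Fin n) (Fin n) ℝ) ⊗ₖ BJ := rfl
private lemma quatK_eq (n : ℕ) : quatK n = (1 : Matrix (Fin n) (Fin n) ℝ) ⊗ₖ BK := rfl

private lemma kron_mul {n : ℕ} (B C : Matrix (Fin 4) (Fin 4) ℝ) :
    ((1 : Matrix (Fin n) (Fin n) ℝ) ⊗ₖ B) * ((1 : Matrix (Fin n) (Fin n) ℝ) ⊗ₖ C)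
      = (1 : Matrix (Fin n) (Fin n) ℝ) ⊗ₖ (B * C) := by
  rw [← Matrix.mul_kronecker_mul, Matrix.one_mul]

private lemma kron_neg {n : ℕ} (B : Matrix (Fin 4) (Fin 4) ℝ) :
    (1 : Matrix (Fin n) (Fin n) ℝ) ⊗ₖ (-B) = -((1 : Matrix (Fin n) (Fin n) ℝ) ⊗ₖ B) := by
  have : (-B : Matrix (Fin 4) (Fin 4) ℝ) = (-1 : ℝ) • B := by simp
  rw [this, Matrix.kronecker_smul]; simp

private lemma kron_neg_one {n : ℕ} :
    (1 : Matrix (Fin n) (Fin n) ℝ) ⊗ₖ (-1 : Matrix (Fin 4) (Fin 4) ℝ) = -1 := by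
  rw [kron_neg, Matrix.one_kronecker_one]

private lemma BImulBI : BI * BI = -1 := by
  ext i j
  fin_cases i <;> fin_cases j <;>
    simp [BI, Matrix.mul_apply, Fin.sum_univ_four, Matrix.one_apply, Matrix.vecHead,
      Matrix.vecTail]

private lemma BJmulBJ : BJ * BJ = -1 := by
  ext i j
  fin_cases i <;> fin_cases j <;>
    simp [BJ, Matrix.mul_apply, Fin.sum_univ_four, Matrix.one_apply, Matrix.vecHead,
      Matrix.vecTail]

private lemma BKmulBK : BK * BK = -1 := by
  ext i j
  fin_cases i <;> fin_cases j <;>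
    simp [BK, Matrix.mul_apply, Fin.sum_univ_four, Matrix.one_apply, Matrix.vecHead,
      Matrix.vecTail]

private lemma BImulBJ : BI * BJ = BK := by
  ext i j
  fin_cases i <;> fin_cases j <;>
    simp [BI, BJ, BK, Matrix.mul_apply, Fin.sum_univ_four, Matrix.vecHead, Matrix.vecTail]

private lemma BJmulBI : BJ * BI = -BK := by
  ext i j
  fin_cases i <;> fin_cases j <;>
    simp [BI, BJ, BK, Matrix.mul_apply, Fin.sum_univ_four, Matrix.vecHead, Matrix.vecTail]

private lemma BJmulBK : BJ * BK = BI := by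
  ext i j
  fin_cases i <;> fin_cases j <;>
    simp [BI, BJ, BK, Matrix.mul_apply, Fin.sum_univ_four, Matrix.vecHead, Matrix.vecTail]

private lemma BKmulBJ : BK * BJ = -BI := by
  ext i j
  fin_cases i <;> fin_cases j <;>
    simp [BI, BJ, BK, Matrix.mul_apply, Fin.sum_univ_four, Matrix.vecHead, Matrix.vecTail]

private lemma BKmulBI : BK * BI = BJ := by
  ext i j
  fin_cases i <;> fin_cases j <;>
    simp [BI, BJ, BK, Matrix.mul_apply, Fin.sum_univ_four, Matrix.vecHead, Matrix.vecTail]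

private lemma BImulBK : BI * BK = -BJ := by
  ext i j
  fin_cases i <;> fin_cases j <;>
    simp [BI, BJ, BK, Matrix.mul_apply, Fin.sum_univ_four, Matrix.vecHead, Matrix.vecTail]

private lemma II (n : ℕ) : quatI n * quatI n = -1 := by
  rw [quatI_eq, kron_mul, BImulBI, kron_neg_one]
private lemma JJ (n : ℕ) : quatJ n * quatJ n = -1 := by
  rw [quatJ_eq, kron_mul, BJmulBJ, kron_neg_one]
private lemma KK (n : ℕ) : quatK n * quatK n = -1 := by
  rw [quatK_eq, kron_mul, BKmulBK, kron_neg_one]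
private lemma IJ (n : ℕ) : quatI n * quatJ n = quatK n := by
  rw [quatI_eq, quatJ_eq, kron_mul, BImulBJ, quatK_eq]
private lemma JI (n : ℕ) : quatJ n * quatI n = -quatK n := by
  rw [quatI_eq, quatJ_eq, kron_mul, BJmulBI, kron_neg, quatK_eq]
private lemma JK (n : ℕ) : quatJ n * quatK n = quatI n := by
  rw [quatJ_eq, quatK_eq, kron_mul, BJmulBK, quatI_eq]
private lemma KJ (n : ℕ) : quatK n * quatJ n = -quatI n := by
  rw [quatJ_eq, quatK_eq, kron_mul, BKmulBJ, kron_neg, quatI_eq]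
private lemma KI (n : ℕ) : quatK n * quatI n = quatJ n := by
  rw [quatI_eq, quatK_eq, kron_mul, BKmulBI, quatJ_eq]
private lemma IK (n : ℕ) : quatI n * quatK n = -quatJ n := by
  rw [quatI_eq, quatK_eq, kron_mul, BImulBK, kron_neg, quatJ_eq]

private lemma mem_quatSpan_iff {n : ℕ} (L : Matrix (Fin n × Fin 4) (Fin n × Fin 4) ℝ) :
    L ∈ quatSpan n ↔ ∃ α β γ : ℝ, L = α • quatI n + β • quatJ n + γ • quatK n := by
  constructor
  · intro hL
    rw [quatSpan, Submodule.mem_span_insert] at hL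
    obtain ⟨α, z, hz, rfl⟩ := hL
    rw [Submodule.mem_span_insert] at hz
    obtain ⟨β, w, hw, rfl⟩ := hz
    rw [Submodule.mem_span_singleton] at hw
    obtain ⟨γ, rfl⟩ := hw
    exact ⟨α, β, γ, by abel⟩
  · rintro ⟨α, β, γ, rfl⟩
    refine Submodule.add_mem _ (Submodule.add_mem _ ?_ ?_) ?_ <;>
      refine Submodule.smul_mem _ _ (Submodule.subset_span ?_) <;> simp

private lemma span_sq {n : ℕ} (α β γ : ℝ) :
    (α • quatI n + β • quatJ n + γ • quatK n) * (α • quatI n + β • quatJ n + γ • quatK n)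
      = -((α ^ 2 + β ^ 2 + γ ^ 2) • (1 : Matrix (Fin n × Fin 4) (Fin n × Fin 4) ℝ)) := by
  simp only [add_mul, mul_add, Matrix.smul_mul, Matrix.mul_smul, II, JJ, KK, IJ, JI, JK, KJ,
    KI, IK, smul_smul, smul_neg]
  module

private lemma span_mulVec_eq_zero {n : ℕ} (P : Matrix (Fin n × Fin 4) (Fin n × Fin 4) ℝ)
    (hP : P ∈ quatSpan n) (v : Fin n × Fin 4 → ℝ) (hv : v ≠ 0) (h0 : P.mulVec v = 0) :
    P = 0 := by
  rw [mem_quatSpan_iff] at hP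
  obtain ⟨α, β, γ, rfl⟩ := hP
  set P := α • quatI n + β • quatJ n + γ • quatK n with hPdef
  have h2 : (P * P) *ᵥ v = 0 := by
    rw [← Matrix.mulVec_mulVec, h0, Matrix.mulVec_zero]
  rw [span_sq, Matrix.neg_mulVec, Matrix.smul_mulVec, Matrix.one_mulVec,
    neg_eq_zero] at h2
  obtain ⟨q, hq⟩ := Function.ne_iff.mp hv
  have h3 : (α ^ 2 + β ^ 2 + γ ^ 2) * v q = 0 := congrFun h2 q
  have h4 : α ^ 2 + β ^ 2 + γ ^ 2 = 0 := by
    rcases mul_eq_zero.mp h3 with h | h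
    · exact h
    · exact absurd h hq
  have hα : α = 0 := by nlinarith [sq_nonneg α, sq_nonneg β, sq_nonneg γ]
  have hβ : β = 0 := by nlinarith [sq_nonneg α, sq_nonneg β, sq_nonneg γ]
  have hγ : γ = 0 := by nlinarith [sq_nonneg α, sq_nonneg β, sq_nonneg γ]
  simp [hPdef, hα, hβ, hγ]

private lemma span_block {n : ℕ} (L : Matrix (Fin n × Fin 4) (Fin n × Fin 4) ℝ)
    (hL : L ∈ quatSpan n) (i j : Fin n) (s t : Fin 4) (hij : i ≠ j) : L (i, s) (j, t) = 0 := by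
  rw [mem_quatSpan_iff] at hL
  obtain ⟨α, β, γ, rfl⟩ := hL
  simp [quatI, quatJ, quatK, Matrix.one_apply_ne hij]

private lemma conj_mulVec {n : ℕ} (g L : Matrix (Fin n × Fin 4) (Fin n × Fin 4) ℝ)
    (hg : memSpnSp1 n g) (x : Fin n × Fin 4 → ℝ) :
    (g * L * g⁻¹) *ᵥ (g *ᵥ x) = g *ᵥ (L *ᵥ x) := by
  have hdet : IsUnit g.det := by rw [hg.2.1]; exact isUnit_one
  rw [Matrix.mulVec_mulVec, Matrix.mul_assoc (g * L), Matrix.nonsing_inv_mul _ hdet,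
    Matrix.mul_one, ← Matrix.mulVec_mulVec]

private lemma single_dot {n : ℕ} (p : Fin n × Fin 4) (v : Fin n × Fin 4 → ℝ) :
    ∑ q, (Pi.single p 1 : Fin n × Fin 4 → ℝ) q * v q = v p := by
  rw [Finset.sum_eq_single p]
  · simp
  · intro q _ hq; simp [Pi.single_eq_of_ne hq]
  · simp

private lemma key_conj {n : ℕ} (hn : 2 ≤ n)
    (a : Matrix (Fin n × Fin 4) (Fin n × Fin 4) ℝ)
    (haD : a.det = 1)
    (h : ∀ x : Fin n × Fin 4 → ℝ, x ≠ 0 →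
      ∀ L ∈ quatSpan n, L * L = -1 →
      ∀ y : Fin n × Fin 4 → ℝ,
        (∑ i, y i * x i = 0) → (∑ i, y i * L.mulVec x i = 0) →
        ∃ g, memSpnSp1 n g ∧
          a.mulVec x = g.mulVec x ∧
          a.mulVec (L.mulVec x) = g.mulVec (L.mulVec x) ∧
          a.mulVec y = g.mulVec y ∧
          a.mulVec (L.mulVec y) = g.mulVec (L.mulVec y))
    (L : Matrix (Fin n × Fin 4) (Fin n × Fin 4) ℝ)
    (hL : L ∈ quatSpan n) (hL2 : L * L = -1) :
    ∃ P ∈ quatSpan n, a * L = P * a := by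
  have hdet : IsUnit a.det := by rw [haD]; exact isUnit_one
  have hainv : a⁻¹ * a = 1 := Matrix.nonsing_inv_mul a hdet
  set e : Fin n → Fin 4 → (Fin n × Fin 4 → ℝ) := fun i s => Pi.single (i, s) 1 with he
  have he0 : ∀ i s, e i s ≠ 0 := by
    intro i s hc
    simpa [he] using congrFun hc (i, s)
  have hmulinj : ∀ x : Fin n × Fin 4 → ℝ, x ≠ 0 → a *ᵥ x ≠ 0 := by
    intro x hx hc
    apply hx
    have : a⁻¹ *ᵥ (a *ᵥ x) = a⁻¹ *ᵥ 0 := by rw [hc]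
    rwa [Matrix.mulVec_mulVec, hainv, Matrix.one_mulVec, Matrix.mulVec_zero] at this
  have orth1 : ∀ (i j : Fin n) (s t : Fin 4), i ≠ j → ∑ q, e j t q * e i s q = 0 := by
    intro i j s t hij
    rw [he, single_dot]
    exact Pi.single_eq_of_ne (by simp [Prod.ext_iff]; intro hc; exact absurd hc.symm hij) _
  have orth2 : ∀ (i j : Fin n) (s t : Fin 4), i ≠ j → ∑ q, e j t q * (L *ᵥ e i s) q = 0 := by
    intro i j s t hij
    rw [he, single_dot]
    simp only [Matrix.mulVec_single, mul_one]
    simpa using span_block L hL j i t s (Ne.symm hij)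
  have main : ∀ x : Fin n × Fin 4 → ℝ, x ≠ 0 → ∀ y : Fin n × Fin 4 → ℝ,
      (∑ q, y q * x q = 0) → (∑ q, y q * (L *ᵥ x) q = 0) →
      ∃ Q ∈ quatSpan n, Q *ᵥ (a *ᵥ x) = a *ᵥ (L *ᵥ x) ∧ Q *ᵥ (a *ᵥ y) = a *ᵥ (L *ᵥ y) := by
    intro x hx y h1 h2
    obtain ⟨g, hg, e1, e2, e3, e4⟩ := h x hx L hL hL2 y h1 h2
    refine ⟨g * L * g⁻¹, hg.2.2 L hL, ?_, ?_⟩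
    · rw [e1, conj_mulVec g L hg x, e2]
    · rw [e3, conj_mulVec g L hg y, e4]
  have uniq : ∀ Q ∈ quatSpan n, ∀ Q' ∈ quatSpan n, ∀ v : Fin n × Fin 4 → ℝ, v ≠ 0 →
      Q *ᵥ v = Q' *ᵥ v → Q = Q' := by
    intro Q hQ Q' hQ' v hv hvv
    have h0 : Q - Q' = 0 :=
      span_mulVec_eq_zero (Q - Q') (Submodule.sub_mem _ hQ hQ') v hv
        (by rw [Matrix.sub_mulVec, hvv, sub_self])
    exact sub_eq_zero.mp h0
  set i0 : Fin n := ⟨0, by omega⟩ with hi0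
  set i1 : Fin n := ⟨1, by omega⟩ with hi1
  have h01 : i0 ≠ i1 := by simp [hi0, hi1, Fin.ext_iff]
  obtain ⟨P, hP, hP1, -⟩ :=
    main (e i0 0) (he0 _ _) (e i1 0) (orth1 i0 i1 0 0 h01) (orth2 i0 i1 0 0 h01)
  have step1 : ∀ (i : Fin n) (s : Fin 4), i ≠ i0 →
      a *ᵥ (L *ᵥ e i s) = P *ᵥ (a *ᵥ e i s) := by
    intro i s hi
    obtain ⟨Q, hQ, hQ1, hQ2⟩ :=
      main (e i0 0) (he0 _ _) (e i s) (orth1 i0 i 0 s (Ne.symm hi)) (orth2 i0 i 0 s (Ne.symm hi))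
    have hQP : Q = P :=
      uniq Q hQ P hP (a *ᵥ e i0 0) (hmulinj _ (he0 _ _)) (by rw [hQ1, hP1])
    rw [← hQ2, hQP]
  have keyv : ∀ (i : Fin n) (s : Fin 4),
      a *ᵥ (L *ᵥ e i s) = P *ᵥ (a *ᵥ e i s) := by
    intro i s
    by_cases hi : i = i0
    · obtain ⟨Q, hQ, hQ1, hQ2⟩ :=
        main (e i1 0) (he0 _ _) (e i s)
          (orth1 i1 i 0 s (by rw [hi]; exact Ne.symm h01))
          (orth2 i1 i 0 s (by rw [hi]; exact Ne.symm h01))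
      have hQP : Q = P :=
        uniq Q hQ P hP (a *ᵥ e i1 0) (hmulinj _ (he0 _ _))
          (by rw [hQ1, step1 i1 0 (Ne.symm h01)])
      rw [← hQ2, hQP]
    · exact step1 i s hi
  refine ⟨P, hP, ?_⟩
  apply Matrix.ext
  rintro p ⟨j, t⟩
  have hcol : (a * L) *ᵥ e j t = (P * a) *ᵥ e j t := by
    rw [← Matrix.mulVec_mulVec, ← Matrix.mulVec_mulVec, keyv j t]
  have hpt := congrFun hcol p
  simpa [he] using hpt

end Aux

theorem stmt_14 (n : ℕ) (hn : 2 ≤ n)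
    (a : Matrix (Fin n × Fin 4) (Fin n × Fin 4) ℝ)
    (haO : a * a.transpose = 1) (haD : a.det = 1)
    (h : ∀ x : Fin n × Fin 4 → ℝ, x ≠ 0 →
      ∀ L ∈ quatSpan n, L * L = -1 →
      ∀ y : Fin n × Fin 4 → ℝ,
        (∑ i, y i * x i = 0) → (∑ i, y i * L.mulVec x i = 0) →
        ∃ g, memSpnSp1 n g ∧
          a.mulVec x = g.mulVec x ∧
          a.mulVec (L.mulVec x) = g.mulVec (L.mulVec x) ∧
          a.mulVec y = g.mulVec y ∧
          a.mulVec (L.mulVec y) = g.mulVec (L.mulVec y)) :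
    memSpnSp1 n a := by
  have hdet : IsUnit a.det := by rw [haD]; exact isUnit_one
  have hainv : a * a⁻¹ = 1 := Matrix.mul_nonsing_inv a hdet
  have hImem : quatI n ∈ quatSpan n := Submodule.subset_span (by simp)
  have hJmem : quatJ n ∈ quatSpan n := Submodule.subset_span (by simp)
  have hKmem : quatK n ∈ quatSpan n := Submodule.subset_span (by simp)
  obtain ⟨PI, hPI, hPIeq⟩ := key_conj hn a haD h (quatI n) hImem (II n)
  obtain ⟨PJ, hPJ, hPJeq⟩ := key_conj hn a haD h (quatJ n) hJmem (JJ n)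
  obtain ⟨PK, hPK, hPKeq⟩ := key_conj hn a haD h (quatK n) hKmem (KK n)
  have cI : a * quatI n * a⁻¹ = PI := by
    rw [hPIeq, Matrix.mul_assoc, hainv, Matrix.mul_one]
  have cJ : a * quatJ n * a⁻¹ = PJ := by
    rw [hPJeq, Matrix.mul_assoc, hainv, Matrix.mul_one]
  have cK : a * quatK n * a⁻¹ = PK := by
    rw [hPKeq, Matrix.mul_assoc, hainv, Matrix.mul_one]
  refine ⟨haO, haD, ?_⟩
  intro L hL
  rw [mem_quatSpan_iff] at hL
  obtain ⟨α, β, γ, rfl⟩ := hL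
  have expand : a * (α • quatI n + β • quatJ n + γ • quatK n) * a⁻¹
      = α • PI + β • PJ + γ • PK := by
    rw [mul_add, mul_add, add_mul, add_mul, Matrix.mul_smul, Matrix.mul_smul, Matrix.mul_smul,
      Matrix.smul_mul, Matrix.smul_mul, Matrix.smul_mul, cI, cJ, cK]
  rw [expand]
  exact Submodule.add_mem _ (Submodule.add_mem _ (Submodule.smul_mem _ _ hPI)
    (Submodule.smul_mem _ _ hPJ)) (Submodule.smul_mem _ _ hPK)
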